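/- There exists a constant C > 0 such that for every ε > 0 there exists N such that for all n ≥ N, for every odd prime q with q ≤ n^{1/2}/(log n)^C, for every a ∈ (ℤ/qℤ)^n \ 𝓛(n,q) and every v ∈ (ℤ/qℤ)^n, one has |Pr[M_n · a = v] − q^{−n}| ≤ ε · q^{−n}, where the matrix–vector product is over ℤ/qℤ. -/

import Mathlib

/-- The random symmetric ±1 matrix: the upper-triangular entries
(including diagonal) are determined by independent fair coin flips
`σ i j` for `i ≤ j`, and the matrix is symmetric. -/
def signMatrix (n : ℕ) (σ : Fin n → Fin n → Bool) : Matrix (Fin n) (Fin n) ℤ :=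
  fun i j => if σ (min i j) (max i j) then 1 else -1

/-- Probability, under the uniform distribution on symmetric ±1 matrices,
that the matrix satisfies `P`. -/
noncomputable def probSym (n : ℕ) (P : Matrix (Fin n) (Fin n) ℤ → Prop) : ℝ :=
  (Nat.card {σ : Fin n → Fin n → Bool // P (signMatrix n σ)} : ℝ) /
    Fintype.card (Fin n → Fin n → Bool)

/-- `a ∈ 𝓛(n,q)`: some level set of `a` has size at least `n - n/(log n)²`. -/
def inL (n q : ℕ) (a : Fin n → ZMod q) : Prop :=
  ∃ r : ZMod q,
    (n : ℝ) - n / (Real.log n) ^ 2 ≤ (Finset.univ.filter (fun i => a i = r)).card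

namespace CJMS

open Finset

variable {n q : ℕ}

def coef (ξ a : Fin n → ZMod q) (p : Fin n × Fin n) : ZMod q :=
  if p.1 = p.2 then ξ p.1 * a p.1 else ξ p.1 * a p.2 + ξ p.2 * a p.1

lemma coef_swap (ξ a : Fin n → ZMod q) (p : Fin n × Fin n) :
    coef ξ a p.swap = coef ξ a p := by
  obtain ⟨i, j⟩ := p
  unfold coef
  rcases eq_or_ne i j with rfl | h
  · simp
  · simp only [Prod.swap_prod_mk]
    rw [if_neg h, if_neg (Ne.symm h), add_comm]

def upper (n : ℕ) : Finset (Fin n × Fin n) := univ.filter (fun p => p.1 ≤ p.2)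

lemma sum_pair_split {M : Type*} [AddCommMonoid M] (g : Fin n → Fin n → M) :
    ∑ i, ∑ j, g i j
      = ∑ p ∈ upper n, (if p.1 = p.2 then g p.1 p.1 else g p.1 p.2 + g p.2 p.1) := by
  classical
  have key : ∑ p ∈ univ.filter (fun p : Fin n × Fin n => p.2 < p.1), g p.1 p.2
      = ∑ p ∈ univ.filter (fun p : Fin n × Fin n => p.1 < p.2), g p.2 p.1 := by
    refine Finset.sum_nbij' (fun p => p.swap) (fun p => p.swap) ?_ ?_ ?_ ?_ ?_
    · intro p hp; simp only [mem_filter, mem_univ, true_and] at hp ⊢; exact hp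
    · intro p hp; simp only [mem_filter, mem_univ, true_and] at hp ⊢; exact hp
    · intro p _; simp
    · intro p _; simp
    · intro p _; rfl
  have hsplitU : upper n = univ.filter (fun p : Fin n × Fin n => p.1 = p.2)
      ∪ univ.filter (fun p : Fin n × Fin n => p.1 < p.2) := by
    ext p
    simp only [upper, mem_filter, mem_union, mem_univ, true_and]
    constructor
    · intro h; rcases lt_or_eq_of_le h with h' | h'
      · exact Or.inr h'
      · exact Or.inl h'
    · rintro (h | h)
      · exact le_of_eq h
      · exact le_of_lt h
  have hdisj : Disjoint (univ.filter (fun p : Fin n × Fin n => p.1 = p.2))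
      (univ.filter (fun p : Fin n × Fin n => p.1 < p.2)) := by
    rw [Finset.disjoint_left]
    intro p hp1 hp2
    simp only [mem_filter, mem_univ, true_and] at hp1 hp2
    exact absurd (hp1 ▸ hp2) (lt_irrefl _)
  have L1 : ∑ i, ∑ j, g i j = ∑ p ∈ (univ : Finset (Fin n × Fin n)), g p.1 p.2 := by
    rw [← Finset.univ_product_univ, Finset.sum_product]
  rw [L1, ← Finset.sum_filter_add_sum_filter_not univ (fun p : Fin n × Fin n => p.1 ≤ p.2)]
  have hnot : univ.filter (fun p : Fin n × Fin n => ¬ p.1 ≤ p.2)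
      = univ.filter (fun p : Fin n × Fin n => p.2 < p.1) := by
    apply Finset.filter_congr; intro p _; simp [not_le]
  have hupper : univ.filter (fun p : Fin n × Fin n => p.1 ≤ p.2) = upper n := rfl
  rw [hnot, key, hupper, hsplitU, Finset.sum_union hdisj, Finset.sum_union hdisj]
  have e1 : ∑ p ∈ univ.filter (fun p : Fin n × Fin n => p.1 = p.2),
      (if p.1 = p.2 then g p.1 p.1 else g p.1 p.2 + g p.2 p.1)
      = ∑ p ∈ univ.filter (fun p : Fin n × Fin n => p.1 = p.2), g p.1 p.2 := by
    refine Finset.sum_congr rfl fun p hp => ?_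
    simp only [mem_filter, mem_univ, true_and] at hp
    rw [if_pos hp]; rw [hp]
  have e2 : ∑ p ∈ univ.filter (fun p : Fin n × Fin n => p.1 < p.2),
      (if p.1 = p.2 then g p.1 p.1 else g p.1 p.2 + g p.2 p.1)
      = ∑ p ∈ univ.filter (fun p : Fin n × Fin n => p.1 < p.2), (g p.1 p.2 + g p.2 p.1) := by
    refine Finset.sum_congr rfl fun p hp => ?_
    simp only [mem_filter, mem_univ, true_and] at hp
    rw [if_neg (ne_of_lt hp)]
  rw [e1, e2, Finset.sum_add_distrib]
  abel

section charsec
variable [NeZero q]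

noncomputable abbrev e : ZMod q → ℂ := ZMod.stdAddChar

lemma half_abs (c : ZMod q) :
    ‖(e c + e (-c)) / 2‖ = |Real.cos (2 * Real.pi * c.val / q)| := by
  show ‖(ZMod.stdAddChar c + ZMod.stdAddChar (-c)) / 2‖ = _
  have hcast : (((c.val : ℤ)) : ZMod q) = c := by
    push_cast [ZMod.natCast_zmod_val]; rfl
  have h1 : ZMod.stdAddChar c = Complex.exp ((2 * Real.pi * c.val / q : ℝ) * Complex.I) := by
    have key := ZMod.stdAddChar_coe (N := q) (c.val : ℤ)
    rw [hcast] at key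
    rw [key]
    congr 1
    push_cast
    ring
  have h2 : ZMod.stdAddChar (-c)
      = Complex.exp (-(2 * Real.pi * c.val / q : ℝ) * Complex.I) := by
    have key := ZMod.stdAddChar_coe (N := q) (-(c.val : ℤ))
    rw [Int.cast_neg, hcast] at key
    rw [key]
    congr 1
    push_cast
    ring
  rw [h1, h2, ← Complex.two_cos, ← Complex.ofReal_cos,
    mul_div_cancel_left₀ _ (two_ne_zero' ℂ), Complex.norm_real, Real.norm_eq_abs]
end charsec

lemma abs_cos_le (hq : q.Prime) (hq2 : q ≠ 2) {c : ZMod q} (hc : c ≠ 0) :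
    |Real.cos (2 * Real.pi * c.val / q)| ≤ Real.cos (Real.pi / q) := by
  haveI : NeZero q := ⟨hq.ne_zero⟩
  have hq0 : (0:ℝ) < q := by exact_mod_cast hq.pos
  set θ : ℝ := 2 * Real.pi * c.val / q with hθ
  set k : ℤ := round (θ / Real.pi) with hk
  have hπ : (0:ℝ) < Real.pi := Real.pi_pos
  have hcos : |Real.cos θ| = |Real.cos (θ - k * Real.pi)| := by
    have h := Real.cos_antiperiodic.add_int_mul_eq (x := θ - k * Real.pi) k
    have h' : θ - k * Real.pi + k * Real.pi = θ := by ring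
    rw [h'] at h
    rw [h]
    rcases Int.units_eq_one_or k.negOnePow with hu | hu <;> rw [hu] <;> simp
  have hle : |θ - k * Real.pi| ≤ Real.pi / 2 := by
    have h := abs_sub_round (θ / Real.pi)
    have hrw : θ - k * Real.pi = (θ / Real.pi - k) * Real.pi := by
      rw [sub_mul, div_mul_cancel₀ _ hπ.ne']
    rw [hrw, abs_mul, abs_of_pos hπ]
    nlinarith
  have hge : Real.pi / q ≤ |θ - k * Real.pi| := by
    have hval1 : 1 ≤ c.val := Nat.one_le_iff_ne_zero.mpr (fun h => hc (by
      rw [← ZMod.natCast_zmod_val c, h]; simp))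
    have hvalq : c.val < q := ZMod.val_lt c
    have hint : (2 * (c.val:ℤ) - k * q) ≠ 0 := by
      intro h
      have hdvd : (q:ℤ) ∣ 2 * (c.val:ℤ) := ⟨k, by linarith⟩
      have hdvd' : q ∣ 2 * c.val := by exact_mod_cast hdvd
      rcases (Nat.Prime.dvd_mul hq).mp hdvd' with h' | h'
      · exact hq2 ((Nat.prime_dvd_prime_iff_eq hq Nat.prime_two).mp h')
      · exact absurd (Nat.le_of_dvd (by omega) h') (by omega)
    have habs : (1:ℝ) ≤ |2 * (c.val:ℝ) - k * q| := by
      have h := Int.one_le_abs hint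
      exact_mod_cast h
    have hrw : θ - k * Real.pi = (Real.pi / q) * (2 * c.val - k * q) := by
      rw [hθ]
      field_simp
    rw [hrw, abs_mul, abs_of_pos (by positivity : (0:ℝ) < Real.pi / q)]
    nlinarith [div_pos hπ hq0]
  rw [hcos]
  have habs2 : |Real.cos (θ - k * Real.pi)| = Real.cos |θ - k * Real.pi| := by
    rw [Real.cos_abs, abs_of_nonneg]
    apply Real.cos_nonneg_of_mem_Icc
    constructor
    · linarith [(abs_le.mp hle).1]
    · linarith [(abs_le.mp hle).2]
  rw [habs2]
  apply Real.cos_le_cos_of_nonneg_of_le_pi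
  · positivity
  · linarith
  · exact hge

lemma cos_pi_div_le (hq3 : 3 ≤ q) : Real.cos (Real.pi / q) ≤ 1 - 2/(q:ℝ)^2 := by
  have hq0 : (3:ℝ) ≤ q := by exact_mod_cast hq3
  have hπ3 : (3:ℝ) ≤ Real.pi := by linarith [Real.pi_gt_three]
  have hπ4 : Real.pi ≤ 4 := by linarith [Real.pi_le_four]
  set x : ℝ := Real.pi / (2 * q) with hx
  have hx0 : 0 < x := by positivity
  have hx1 : x ≤ 1 := by
    rw [hx, div_le_one (by positivity)]
    linarith
  have hsin : x - x^3/4 < Real.sin x := by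
    have := Real.sin_gt_sub_cube hx0
    nlinarith [pow_pos hx0 3]
  have hxlb : 3 / (2*(q:ℝ)) ≤ x := by
    rw [hx]
    gcongr
  have hxub : x ≤ 2/(q:ℝ) := by
    rw [hx, div_le_div_iff₀ (by positivity) (by positivity)]
    nlinarith
  have hsq : x^2 ≤ (2/(q:ℝ))^2 := by nlinarith
  have hx3 : x^3 ≤ x * (2/(q:ℝ))^2 := by
    calc x^3 = x * x^2 := by ring
      _ ≤ x * (2/(q:ℝ))^2 := mul_le_mul_of_nonneg_left hsq hx0.le
  have hq2pos : (0:ℝ) < (q:ℝ)^2 := by positivity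
  have hq2 : (1:ℝ)/(q:ℝ)^2 ≤ 1/9 := by
    rw [div_le_div_iff₀ hq2pos (by norm_num)]
    nlinarith
  have hkey : x * (2/(q:ℝ))^2 = 4 * (x * (1/(q:ℝ)^2)) := by
    field_simp
    ring
  have h5 : x - x * (1/9) ≤ Real.sin x := by
    have h51 : x * (1/(q:ℝ)^2) ≤ x * (1/9) := mul_le_mul_of_nonneg_left hq2 hx0.le
    nlinarith
  have h6 : (1:ℝ)/q ≤ 8/9 * x := by
    have h61 : (8/9 : ℝ) * (3/(2*(q:ℝ))) ≤ 8/9 * x :=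
      mul_le_mul_of_nonneg_left hxlb (by norm_num)
    have h62 : (8/9 : ℝ) * (3/(2*(q:ℝ))) = 4/(3*(q:ℝ)) := by
      field_simp
      ring
    have h63 : (1:ℝ)/q ≤ 4/(3*(q:ℝ)) := by
      rw [div_le_div_iff₀ (by positivity) (by positivity)]
      nlinarith
    linarith
  have hs1 : 1/(q:ℝ) ≤ Real.sin x := by linarith
  have h2x : Real.pi/(q:ℝ) = 2*x := by
    rw [hx]
    field_simp
  have hhalf : Real.cos (2*x) = 1 - 2 * Real.sin x ^ 2 := by
    rw [Real.cos_two_mul]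
    have := Real.sin_sq_add_cos_sq x
    linarith
  rw [h2x, hhalf]
  have hsq2 : (1/(q:ℝ))^2 ≤ Real.sin x ^ 2 := by
    apply pow_le_pow_left₀ (by positivity) hs1
  have e1 : (1/(q:ℝ))^2 = 1/(q:ℝ)^2 := by ring
  rw [e1] at hsq2
  have e2 : (2:ℝ)/(q:ℝ)^2 = 2 * (1/(q:ℝ)^2) := by ring
  rw [e2]
  linarith

section charsec
variable [NeZero q]

lemma e_sum {ι : Type*} (s : Finset ι) (f : ι → ZMod q) :
    ZMod.stdAddChar (∑ i ∈ s, f i) = ∏ i ∈ s, ZMod.stdAddChar (f i) := by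
  classical
  induction s using Finset.cons_induction with
  | empty => simp
  | cons i s hi ih => rw [Finset.sum_cons, Finset.prod_cons, AddChar.map_add_eq_mul, ih]

lemma bilin (σ : Fin n → Fin n → Bool) (ξ a : Fin n → ZMod q) :
    ∑ i, ξ i * (((signMatrix n σ).map (Int.cast : ℤ → ZMod q)).mulVec a) i
      = ∑ p ∈ upper n, (if σ p.1 p.2 then coef ξ a p else - coef ξ a p) := by
  have hL : ∑ i, ξ i * (((signMatrix n σ).map (Int.cast : ℤ → ZMod q)).mulVec a) i
      = ∑ i, ∑ j, ξ i * (if σ (min i j) (max i j) then (1:ZMod q) else -1) * a j := by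
    simp only [Matrix.mulVec, dotProduct, Matrix.map_apply, signMatrix, Finset.mul_sum]
    refine Finset.sum_congr rfl fun i _ => Finset.sum_congr rfl fun j _ => ?_
    split <;> push_cast <;> ring
  rw [hL, sum_pair_split (fun i j => ξ i * (if σ (min i j) (max i j) then (1:ZMod q) else -1) * a j)]
  refine Finset.sum_congr rfl fun p hp => ?_
  have hle : p.1 ≤ p.2 := by simpa [upper] using hp
  have hmin : min p.1 p.2 = p.1 := min_eq_left hle
  have hmax : max p.1 p.2 = p.2 := max_eq_right hle
  rcases eq_or_ne p.1 p.2 with h | h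
  · rw [if_pos h]
    unfold coef
    rw [if_pos h, min_self, max_self, show σ p.1 p.2 = σ p.1 p.1 by rw [← h]]
    rcases Bool.eq_false_or_eq_true (σ p.1 p.1) with hb | hb <;> rw [hb] <;> simp <;> ring
  · rw [if_neg h]
    unfold coef
    rw [if_neg h, hmin, hmax, min_comm p.2 p.1, max_comm p.2 p.1, hmin, hmax]
    rcases Bool.eq_false_or_eq_true (σ p.1 p.2) with hb | hb <;> rw [hb] <;> simp <;> ring

lemma G_eq (ξ a : Fin n → ZMod q) :
    ∑ σ : Fin n → Fin n → Bool,
        ZMod.stdAddChar (∑ p ∈ upper n, (if σ p.1 p.2 then coef ξ a p else - coef ξ a p))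
      = 2^(n*n) * ∏ p ∈ upper n,
          ((ZMod.stdAddChar (coef ξ a p) + ZMod.stdAddChar (- coef ξ a p)) / 2) := by
  classical
  have step1 : ∑ σ : Fin n → Fin n → Bool,
      ZMod.stdAddChar (∑ p ∈ upper n, (if σ p.1 p.2 then coef ξ a p else - coef ξ a p))
      = ∑ τ : Fin n × Fin n → Bool,
        ∏ p ∈ upper n, ZMod.stdAddChar (if τ p then coef ξ a p else - coef ξ a p) := by
    rw [← Fintype.sum_equiv (Equiv.curry (Fin n) (Fin n) Bool)
      (fun τ => ZMod.stdAddChar (∑ p ∈ upper n,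
        (if (Equiv.curry (Fin n) (Fin n) Bool τ) p.1 p.2 then coef ξ a p else - coef ξ a p)))
      (fun σ => ZMod.stdAddChar (∑ p ∈ upper n,
        (if σ p.1 p.2 then coef ξ a p else - coef ξ a p))) (fun τ => rfl)]
    refine Finset.sum_congr rfl fun τ _ => ?_
    rw [e_sum]
    refine Finset.prod_congr rfl fun p hp => ?_
    rfl
  rw [step1]
  have step2 : ∀ τ : Fin n × Fin n → Bool,
      ∏ p ∈ upper n, ZMod.stdAddChar (if τ p then coef ξ a p else - coef ξ a p)
      = ∏ p : Fin n × Fin n, (if p ∈ upper n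
          then ZMod.stdAddChar (if τ p then coef ξ a p else - coef ξ a p) else 1) := by
    intro τ
    rw [Finset.prod_ite_mem univ (upper n)
      (fun p => ZMod.stdAddChar (if τ p then coef ξ a p else - coef ξ a p)), Finset.univ_inter]
  simp only [step2]
  rw [← Fintype.piFinset_univ, ← Finset.prod_univ_sum
    (fun _ : Fin n × Fin n => (univ : Finset Bool))
    (fun p b => if p ∈ upper n
      then ZMod.stdAddChar (if b then coef ξ a p else - coef ξ a p) else 1)]
  have step3 : ∀ p : Fin n × Fin n,
      ∑ b : Bool, (if p ∈ upper n
          then ZMod.stdAddChar (if b then coef ξ a p else - coef ξ a p) else 1)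
      = 2 * (if p ∈ upper n
          then (ZMod.stdAddChar (coef ξ a p) + ZMod.stdAddChar (- coef ξ a p)) / 2 else 1) := by
    intro p
    rw [Fintype.sum_bool]
    split
    · rw [if_pos, if_neg]
      · ring
      · simp
      · simp
    · norm_num
  simp only [step3]
  rw [Finset.prod_mul_distrib, Finset.prod_const,
    Finset.prod_ite_mem univ (upper n), Finset.univ_inter]
  congr 1
  simp [Fintype.card_prod]

lemma orth (w : Fin n → ZMod q) :
    ∑ ξ : Fin n → ZMod q, ZMod.stdAddChar (∑ i, ξ i * w i)
      = if w = 0 then (q:ℂ)^n else 0 := by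
  classical
  have h1 : ∀ t : ZMod q, ∑ x : ZMod q, ZMod.stdAddChar (t * x)
      = if t = 0 then (q:ℂ) else 0 := by
    intro t
    split_ifs with h
    · simp [h, ZMod.card]
    · have hne : AddChar.mulShift (ZMod.stdAddChar (N := q)) t ≠ 1 :=
        ZMod.isPrimitive_stdAddChar q h
      simpa [AddChar.mulShift_apply] using AddChar.sum_eq_zero_of_ne_one hne
  have hflip : ∀ t : ZMod q, (∑ x : ZMod q, ZMod.stdAddChar (x * t))
      = ∑ x : ZMod q, ZMod.stdAddChar (t * x) :=
    fun t => Finset.sum_congr rfl fun x _ => by rw [mul_comm]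
  have step1 : ∑ ξ : Fin n → ZMod q, ZMod.stdAddChar (∑ i, ξ i * w i)
      = ∏ i : Fin n, ∑ x : ZMod q, ZMod.stdAddChar (x * w i) := by
    rw [Finset.prod_univ_sum (fun _ : Fin n => (univ : Finset (ZMod q)))
      (fun i x => ZMod.stdAddChar (x * w i)), Fintype.piFinset_univ]
    refine Finset.sum_congr rfl fun ξ _ => ?_
    rw [e_sum]
  rw [step1]
  simp only [hflip]
  by_cases hw : w = 0
  · simp only [hw, if_pos rfl]
    simp [h1]
  · rw [if_neg hw]
    obtain ⟨i, hi⟩ := Function.ne_iff.mp hw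
    refine Finset.prod_eq_zero (Finset.mem_univ i) ?_
    rw [h1, if_neg]
    exact hi

lemma main_identity (a v : Fin n → ZMod q) :
    ((Nat.card {σ : Fin n → Fin n → Bool //
        ((signMatrix n σ).map (Int.cast : ℤ → ZMod q)).mulVec a = v}) : ℂ) * (q:ℂ)^n
      = ∑ ξ : Fin n → ZMod q, (ZMod.stdAddChar (-∑ i, ξ i * v i) *
          (2^(n*n) * ∏ p ∈ upper n,
            ((ZMod.stdAddChar (coef ξ a p) + ZMod.stdAddChar (- coef ξ a p)) / 2))) := by
  classical
  have hcard : ((Nat.card {σ : Fin n → Fin n → Bool //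
      ((signMatrix n σ).map (Int.cast : ℤ → ZMod q)).mulVec a = v}) : ℂ)
      = ∑ σ : Fin n → Fin n → Bool,
        (if ((signMatrix n σ).map (Int.cast : ℤ → ZMod q)).mulVec a = v then (1:ℂ) else 0) := by
    rw [Nat.card_eq_fintype_card, Fintype.card_subtype, Finset.sum_boole]
  rw [hcard, Finset.sum_mul]
  have key : ∀ σ : Fin n → Fin n → Bool,
      (if ((signMatrix n σ).map (Int.cast : ℤ → ZMod q)).mulVec a = v then (1:ℂ) else 0)
          * (q:ℂ)^n
      = ∑ ξ : Fin n → ZMod q, (ZMod.stdAddChar (-∑ i, ξ i * v i) *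
          ZMod.stdAddChar (∑ p ∈ upper n,
            (if σ p.1 p.2 then coef ξ a p else - coef ξ a p))) := by
    intro σ
    have horth := orth (fun i => (((signMatrix n σ).map (Int.cast : ℤ → ZMod q)).mulVec a) i - v i)
    have hiff : ((fun i => (((signMatrix n σ).map (Int.cast : ℤ → ZMod q)).mulVec a) i - v i) = 0)
        ↔ (((signMatrix n σ).map (Int.cast : ℤ → ZMod q)).mulVec a = v) := by
      constructor
      · intro h; funext i
        have := congrFun h i
        simpa [sub_eq_zero] using this
      · intro h; funext i; rw [h]; simp
    have hval : ∀ ξ : Fin n → ZMod q,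
        ZMod.stdAddChar (∑ i, ξ i *
          ((((signMatrix n σ).map (Int.cast : ℤ → ZMod q)).mulVec a) i - v i))
        = ZMod.stdAddChar (-∑ i, ξ i * v i) *
          ZMod.stdAddChar (∑ p ∈ upper n,
            (if σ p.1 p.2 then coef ξ a p else - coef ξ a p)) := by
      intro ξ
      rw [← bilin σ ξ a, ← AddChar.map_add_eq_mul]
      congr 1
      calc ∑ i, ξ i * ((((signMatrix n σ).map (Int.cast : ℤ → ZMod q)).mulVec a) i - v i)
          = ∑ i, (ξ i * (((signMatrix n σ).map (Int.cast : ℤ → ZMod q)).mulVec a) i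
              - ξ i * v i) := by
            refine Finset.sum_congr rfl fun i _ => ?_
            ring
        _ = (∑ i, ξ i * (((signMatrix n σ).map (Int.cast : ℤ → ZMod q)).mulVec a) i)
              - ∑ i, ξ i * v i := Finset.sum_sub_distrib _ _
        _ = (-∑ i, ξ i * v i)
              + ∑ i, ξ i * (((signMatrix n σ).map (Int.cast : ℤ → ZMod q)).mulVec a) i := by
            ring
    rw [ite_mul, one_mul, zero_mul,
      show (if ((signMatrix n σ).map (Int.cast : ℤ → ZMod q)).mulVec a = v
          then (q:ℂ)^n else 0)
        = (if (fun i => (((signMatrix n σ).map (Int.cast : ℤ → ZMod q)).mulVec a) i - v i) = 0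
          then (q:ℂ)^n else 0) from (if_congr hiff rfl rfl).symm, ← horth]
    exact Finset.sum_congr rfl fun ξ _ => hval ξ
  simp only [key]
  rw [Finset.sum_comm]
  refine Finset.sum_congr rfl fun ξ _ => ?_
  rw [← Finset.mul_sum, G_eq]
end charsec

lemma count_bound (hq : q.Prime) (hq2 : q ≠ 2) (a ξ : Fin n → ZMod q) :
    ((univ.filter (fun i => ξ i ≠ 0)).card : ℝ)
        * ((univ.filter (fun i => a i ≠ 0)).card - 2)
      ≤ 4 * ((univ.filter (fun p : Fin n × Fin n => p.1 < p.2 ∧ coef ξ a p ≠ 0)).card) := by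
  classical
  haveI : Fact q.Prime := ⟨hq⟩
  have h2ne : (2 : ZMod q) ≠ 0 := by
    intro h
    have : q ∣ 2 := by
      rw [← ZMod.natCast_eq_zero_iff]
      exact_mod_cast h
    exact hq2 ((Nat.prime_dvd_prime_iff_eq hq Nat.prime_two).mp this)
  set X := univ.filter (fun i => ξ i ≠ 0) with hX
  set S := univ.filter (fun i => a i ≠ 0) with hS
  set A := X ∩ S with hA
  set B := X \ S with hB
  set Z := S \ X with hZ
  -- membership facts
  have hmemA : ∀ i ∈ A, ξ i ≠ 0 ∧ a i ≠ 0 := by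
    intro i hi
    rw [hA, Finset.mem_inter, hX, hS, Finset.mem_filter, Finset.mem_filter] at hi
    exact ⟨hi.1.2, hi.2.2⟩
  have hmemB : ∀ i ∈ B, ξ i ≠ 0 ∧ a i = 0 := by
    intro i hi
    rw [hB, Finset.mem_sdiff, hX, hS, Finset.mem_filter, Finset.mem_filter] at hi
    refine ⟨hi.1.2, ?_⟩
    by_contra h
    exact hi.2 ⟨Finset.mem_univ i, h⟩
  have hmemZ : ∀ i ∈ Z, ξ i = 0 ∧ a i ≠ 0 := by
    intro i hi
    rw [hZ, Finset.mem_sdiff, hX, hS, Finset.mem_filter, Finset.mem_filter] at hi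
    refine ⟨?_, hi.1.2⟩
    by_contra h
    exact hi.2 ⟨Finset.mem_univ i, h⟩
  -- the ratio function
  set r : Fin n → ZMod q := fun i => ξ i * (a i)⁻¹ with hr
  have hrne : ∀ i ∈ A, r i ≠ 0 := by
    intro i hi
    obtain ⟨h1, h2⟩ := hmemA i hi
    exact mul_ne_zero h1 (inv_ne_zero h2)
  have fact1 : ∀ i ∈ A, ∀ j ∈ A, (coef ξ a (i, j) = 0 ↔ r j = - r i) := by
    intro i hi j hj
    obtain ⟨hξi, hai⟩ := hmemA i hi
    obtain ⟨hξj, haj⟩ := hmemA j hj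
    unfold coef
    rcases eq_or_ne i j with rfl | hij
    · rw [if_pos rfl]
      simp only [hr]
      constructor
      · intro h
        exact absurd h (mul_ne_zero hξi hai)
      · intro h
        have h2 : (2 : ZMod q) * (ξ i * (a i)⁻¹) = 0 := by linear_combination h
        rcases mul_eq_zero.mp h2 with h3 | h3
        · exact absurd h3 h2ne
        · exact absurd h3 (mul_ne_zero hξi (inv_ne_zero hai))
    · rw [if_neg hij]
      simp only [hr]
      constructor
      · intro h
        field_simp
        linear_combination h
      · intro h
        field_simp at h
        linear_combination h
  have fact2 : ∀ i ∈ A, ∀ j ∈ A, (ξ i * a j = ξ j * a i ↔ r j = r i) := by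
    intro i hi j hj
    obtain ⟨hξi, hai⟩ := hmemA i hi
    obtain ⟨hξj, haj⟩ := hmemA j hj
    simp only [hr]
    constructor
    · intro h
      field_simp
      linear_combination -h
    · intro h
      field_simp at h
      linear_combination -h
  -- the pair sets
  set D := univ.filter (fun p : Fin n × Fin n => p.1 ≠ p.2 ∧ coef ξ a p ≠ 0) with hD
  set Nset := univ.filter (fun p : Fin n × Fin n => p.1 < p.2 ∧ coef ξ a p ≠ 0) with hNset
  set Gset := univ.filter (fun p : Fin n × Fin n => p.2 < p.1 ∧ coef ξ a p ≠ 0) with hGset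
  have hDsplit : D = Nset ∪ Gset := by
    ext p
    simp only [hD, hNset, hGset, mem_union, mem_filter, mem_univ, true_and]
    constructor
    · rintro ⟨h1, h2⟩
      rcases lt_or_gt_of_ne h1 with h | h
      · exact Or.inl ⟨h, h2⟩
      · exact Or.inr ⟨h, h2⟩
    · rintro (⟨h1, h2⟩ | ⟨h1, h2⟩)
      · exact ⟨ne_of_lt h1, h2⟩
      · exact ⟨(ne_of_lt h1).symm, h2⟩
  have hdisjNG : Disjoint Nset Gset := by
    rw [Finset.disjoint_left]
    intro p h1 h2
    simp only [hNset, hGset, mem_filter] at h1 h2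
    exact absurd (h1.2.1.trans h2.2.1) (lt_irrefl _)
  have hGN : Gset.card = Nset.card := by
    apply Finset.card_nbij' (fun p => p.swap) (fun p => p.swap)
    · intro p hp
      simp only [hGset, hNset, Finset.mem_coe, mem_filter, mem_univ, true_and] at hp ⊢
      exact ⟨hp.1, by rw [coef_swap]; exact hp.2⟩
    · intro p hp
      simp only [hGset, hNset, Finset.mem_coe, mem_filter, mem_univ, true_and] at hp ⊢
      exact ⟨hp.1, by rw [coef_swap]; exact hp.2⟩
    · intro p _
      simp
    · intro p _
      simp
  have hDcard : D.card = 2 * Nset.card := by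
    rw [hDsplit, Finset.card_union_of_disjoint hdisjNG, hGN]
    ring
  set T3 := (A ×ˢ A).filter (fun p => p.1 ≠ p.2 ∧ coef ξ a p ≠ 0) with hT3
  have hT1D : B ×ˢ S ⊆ D := by
    intro p hp
    rw [Finset.mem_product] at hp
    obtain ⟨hξ1, ha1⟩ := hmemB p.1 hp.1
    have ha2 : a p.2 ≠ 0 := by
      have h := hp.2
      rw [hS, mem_filter] at h
      exact h.2
    have hne : p.1 ≠ p.2 := fun h => ha2 (h ▸ ha1)
    rw [hD, mem_filter]
    refine ⟨mem_univ _, hne, ?_⟩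
    unfold coef
    rw [if_neg hne, ha1]
    simpa using mul_ne_zero hξ1 ha2
  have hT2D : A ×ˢ Z ⊆ D := by
    intro p hp
    rw [Finset.mem_product] at hp
    obtain ⟨hξ1, ha1⟩ := hmemA p.1 hp.1
    obtain ⟨hξ2, ha2⟩ := hmemZ p.2 hp.2
    have hne : p.1 ≠ p.2 := fun h => hξ1 (h ▸ hξ2)
    rw [hD, mem_filter]
    refine ⟨mem_univ _, hne, ?_⟩
    unfold coef
    rw [if_neg hne, hξ2]
    simpa using mul_ne_zero hξ1 ha2
  have hT3D : T3 ⊆ D := by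
    intro p hp
    rw [hT3, mem_filter] at hp
    rw [hD, mem_filter]
    exact ⟨mem_univ _, hp.2⟩
  have hd12 : Disjoint (B ×ˢ S) (A ×ˢ Z) := by
    rw [Finset.disjoint_left]
    intro p h1 h2
    rw [Finset.mem_product] at h1 h2
    exact (hmemA p.1 h2.1).2 (hmemB p.1 h1.1).2
  have hd13 : Disjoint (B ×ˢ S) T3 := by
    rw [Finset.disjoint_left]
    intro p h1 h2
    rw [Finset.mem_product] at h1
    rw [hT3, mem_filter, Finset.mem_product] at h2
    exact (hmemA p.1 h2.1.1).2 (hmemB p.1 h1.1).2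
  have hd23 : Disjoint (A ×ˢ Z) T3 := by
    rw [Finset.disjoint_left]
    intro p h1 h2
    rw [Finset.mem_product] at h1
    rw [hT3, mem_filter, Finset.mem_product] at h2
    exact (hmemA p.2 h2.1.2).1 (hmemZ p.2 h1.2).1
  have hcardsum : (B ×ˢ S).card + (A ×ˢ Z).card + T3.card ≤ D.card := by
    rw [← Finset.card_union_of_disjoint hd12,
      ← Finset.card_union_of_disjoint (Finset.disjoint_union_left.mpr ⟨hd13, hd23⟩)]
    exact Finset.card_le_card
      (Finset.union_subset (Finset.union_subset hT1D hT2D) hT3D)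
  set CA := (A ×ˢ A).filter (fun p => coef ξ a p = 0) with hCA
  set EA := (A ×ˢ A).filter (fun p => ξ p.1 * a p.2 = ξ p.2 * a p.1) with hEA
  have hAAsub : A ×ˢ A ⊆ ((A ×ˢ A).filter (fun p => p.1 = p.2)) ∪ CA ∪ T3 := by
    intro p hp
    rw [Finset.mem_union, Finset.mem_union]
    by_cases h1 : p.1 = p.2
    · exact Or.inl (Or.inl (Finset.mem_filter.mpr ⟨hp, h1⟩))
    by_cases h2 : coef ξ a p = 0
    · exact Or.inl (Or.inr (Finset.mem_filter.mpr ⟨hp, h2⟩))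
    · exact Or.inr (Finset.mem_filter.mpr ⟨hp, h1, h2⟩)
  have hdiag : ((A ×ˢ A).filter (fun p => p.1 = p.2)).card ≤ A.card := by
    apply Finset.card_le_card_of_injOn Prod.fst
    · intro p hp
      rw [Finset.mem_coe, mem_filter, Finset.mem_product] at hp
      exact hp.1.1
    · intro p hp p' hp' h
      rw [Finset.mem_coe, mem_filter] at hp hp'
      have h2 : p.2 = p'.2 := by rw [← hp.2, ← hp'.2, h]
      exact Prod.ext h h2
  have htt : A.card * A.card ≤ A.card + CA.card + T3.card := by
    calc A.card * A.card = (A ×ˢ A).card := (Finset.card_product _ _).symm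
      _ ≤ (((A ×ˢ A).filter (fun p => p.1 = p.2)) ∪ CA ∪ T3).card :=
          Finset.card_le_card hAAsub
      _ ≤ (((A ×ˢ A).filter (fun p => p.1 = p.2)) ∪ CA).card + T3.card :=
          Finset.card_union_le _ _
      _ ≤ ((A ×ˢ A).filter (fun p => p.1 = p.2)).card + CA.card + T3.card := by
          have := Finset.card_union_le ((A ×ˢ A).filter (fun p => p.1 = p.2)) CA
          omega
      _ ≤ A.card + CA.card + T3.card := by
          omega
  set g : ZMod q → ℕ := fun v => (A.filter (fun j => r j = v)).card with hg
  have hgroup : ∀ F : ZMod q → ℕ, ∑ i ∈ A, F (r i) = ∑ v : ZMod q, g v * F v := by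
    intro F
    rw [← Finset.sum_fiberwise' A r F]
    refine Finset.sum_congr rfl fun v _ => ?_
    rw [Finset.sum_const, hg, smul_eq_mul]
  have hCAcount : CA.card = ∑ i ∈ A, g (-(r i)) := by
    rw [hCA, Finset.card_filter, Finset.sum_product]
    refine Finset.sum_congr rfl fun i hi => ?_
    have : ∀ j ∈ A, (if coef ξ a (i, j) = 0 then 1 else 0)
        = (if r j = -(r i) then 1 else 0) := by
      intro j hj
      rw [if_congr (fact1 i hi j hj) rfl rfl]
    rw [Finset.sum_congr rfl this, ← Finset.card_filter]
  have hEAcount : EA.card = ∑ i ∈ A, g (r i) := by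
    rw [hEA, Finset.card_filter, Finset.sum_product]
    refine Finset.sum_congr rfl fun i hi => ?_
    have : ∀ j ∈ A, (if ξ i * a j = ξ j * a i then 1 else 0)
        = (if r j = r i then 1 else 0) := by
      intro j hj
      rw [if_congr (fact2 i hi j hj) rfl rfl]
    rw [Finset.sum_congr rfl this, ← Finset.card_filter]
  have hCAEA : CA.card ≤ EA.card := by
    rw [hCAcount, hEAcount, hgroup (fun v => g (-v)), hgroup (fun v => g v)]
    have hreal : (∑ v : ZMod q, (g v * g (-v) : ℝ)) ≤ ∑ v : ZMod q, (g v * g v : ℝ) := by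
      have hswap : ∑ v : ZMod q, ((g (-v) : ℝ) * g (-v)) = ∑ v : ZMod q, ((g v : ℝ) * g v) :=
        Fintype.sum_equiv (Equiv.neg (ZMod q)) _ _ (fun v => by simp)
      have hpt : ∀ v : ZMod q, 2 * ((g v : ℝ) * g (-v))
          ≤ (g v : ℝ) * g v + (g (-v) : ℝ) * g (-v) := by
        intro v
        nlinarith [sq_nonneg ((g v : ℝ) - g (-v))]
      have hsum2 : 2 * ∑ v : ZMod q, ((g v : ℝ) * g (-v))
          ≤ ∑ v : ZMod q, ((g v : ℝ) * g v) + ∑ v : ZMod q, ((g (-v) : ℝ) * g (-v)) := by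
        rw [Finset.mul_sum, ← Finset.sum_add_distrib]
        exact Finset.sum_le_sum (fun v _ => hpt v)
      rw [hswap] at hsum2
      push_cast
      linarith
    exact_mod_cast hreal
  have hCAEAdisj : Disjoint CA EA := by
    rw [Finset.disjoint_left]
    intro p h1 h2
    rw [hCA, mem_filter, Finset.mem_product] at h1
    rw [hEA, mem_filter] at h2
    have e1 := (fact1 p.1 h1.1.1 p.2 h1.1.2).mp h1.2
    have e2 := (fact2 p.1 h1.1.1 p.2 h1.1.2).mp h2.2
    have e3 : (2 : ZMod q) * r p.1 = 0 := by
      rw [e2] at e1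
      linear_combination e1
    rcases mul_eq_zero.mp e3 with h3 | h3
    · exact h2ne h3
    · exact hrne p.1 h1.1.1 h3
  have hCAEAcard : CA.card + EA.card ≤ A.card * A.card := by
    rw [← Finset.card_union_of_disjoint hCAEAdisj, ← Finset.card_product]
    exact Finset.card_le_card
      (Finset.union_subset (Finset.filter_subset _ _) (Finset.filter_subset _ _))
  have hBA : A.card + B.card = X.card := by
    rw [hA, hB]
    exact Finset.card_inter_add_card_sdiff X S
  have hZA : A.card + Z.card = S.card := by
    rw [hA, hZ, Finset.inter_comm]
    exact Finset.card_inter_add_card_sdiff S X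
  have htles : A.card ≤ S.card := Finset.card_le_card (Finset.inter_subset_right)
  -- pass to ℝ
  rw [Finset.card_product, Finset.card_product] at hcardsum
  rw [hDcard] at hcardsum
  have hR1 : (B.card : ℝ) * S.card + (A.card : ℝ) * Z.card + T3.card
      ≤ 2 * Nset.card := by exact_mod_cast hcardsum
  have hR2 : (A.card : ℝ) * A.card ≤ A.card + CA.card + T3.card := by exact_mod_cast htt
  have hR3 : (CA.card : ℝ) ≤ EA.card := by exact_mod_cast hCAEA
  have hR4 : (CA.card : ℝ) + EA.card ≤ A.card * A.card := by exact_mod_cast hCAEAcard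
  have hR5 : (A.card : ℝ) + B.card = X.card := by exact_mod_cast hBA
  have hR6 : (A.card : ℝ) + Z.card = S.card := by exact_mod_cast hZA
  have hR7 : (A.card : ℝ) ≤ S.card := by exact_mod_cast htles
  have hzz : (Z.card : ℝ) = S.card - A.card := by linarith
  have hT2R : (A.card : ℝ) * Z.card = A.card * S.card - A.card * A.card := by
    rw [hzz]
    ring
  have httts : (A.card : ℝ) * A.card ≤ A.card * S.card :=
    mul_le_mul_of_nonneg_left hR7 (Nat.cast_nonneg _)
  have hgoal : (X.card : ℝ) * ((S.card : ℝ) - 2)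
      = B.card * S.card + A.card * S.card - 2 * B.card - 2 * A.card := by
    rw [← hR5]
    ring
  rw [hgoal]
  have hb0 : (0:ℝ) ≤ (B.card : ℝ) := Nat.cast_nonneg _
  have hbs0 : (0:ℝ) ≤ (B.card : ℝ) * S.card :=
    mul_nonneg (Nat.cast_nonneg _) (Nat.cast_nonneg _)
  rw [hT2R] at hR1
  linarith

lemma qge3 (hq : q.Prime) (hq2 : q ≠ 2) : 3 ≤ q := by
  rcases hq.two_le.lt_or_eq with h | h
  · omega
  · omega

lemma rho_nonneg (hq : q.Prime) (hq2 : q ≠ 2) : 0 ≤ Real.cos (Real.pi / q) := by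
  have h3 : (3:ℝ) ≤ q := by exact_mod_cast qge3 hq hq2
  have hπ : (0:ℝ) < Real.pi := Real.pi_pos
  apply Real.cos_nonneg_of_mem_Icc
  constructor
  · have : (0:ℝ) ≤ Real.pi / q := by positivity
    linarith
  · rw [div_le_div_iff₀ (by linarith) (by norm_num)]
    nlinarith

lemma prod_bound (hq : q.Prime) (hq2 : q ≠ 2) (a ξ : Fin n → ZMod q)
    (hs2 : 2 ≤ (univ.filter (fun i => a i ≠ 0)).card) :
    ∏ p ∈ upper n, |Real.cos (2 * Real.pi * (coef ξ a p).val / q)|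
      ≤ (Real.cos (Real.pi / q) ^ (((univ.filter (fun i => a i ≠ 0)).card - 2)/4))
          ^ ((univ.filter (fun i => ξ i ≠ 0)).card) := by
  classical
  set ρ := Real.cos (Real.pi / q) with hρ
  have hρ0 : 0 ≤ ρ := rho_nonneg hq hq2
  have hρ1 : ρ ≤ 1 := Real.cos_le_one _
  set s := (univ.filter (fun i => a i ≠ 0)).card with hs
  set k := (univ.filter (fun i => ξ i ≠ 0)).card with hk
  set W := (s - 2)/4 with hW
  set Nstrict := (univ.filter (fun p : Fin n × Fin n => p.1 < p.2 ∧ coef ξ a p ≠ 0)).card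
    with hNs
  have step1 : ∏ p ∈ upper n, |Real.cos (2 * Real.pi * (coef ξ a p).val / q)|
      ≤ ∏ p ∈ upper n, (if coef ξ a p ≠ 0 then ρ else 1) := by
    apply Finset.prod_le_prod
    · intro p _
      exact abs_nonneg _
    · intro p _
      split_ifs with h
      · exact abs_cos_le hq hq2 h
      · exact Real.abs_cos_le_one _
  have step2 : ∏ p ∈ upper n, (if coef ξ a p ≠ 0 then ρ else 1)
      = ρ ^ ((upper n).filter (fun p => coef ξ a p ≠ 0)).card := by
    rw [Finset.prod_ite, Finset.prod_const, Finset.prod_const, one_pow, mul_one]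
  have step3 : Nstrict ≤ ((upper n).filter (fun p => coef ξ a p ≠ 0)).card := by
    apply Finset.card_le_card
    intro p hp
    rw [Finset.mem_filter] at hp ⊢
    exact ⟨Finset.mem_filter.mpr ⟨Finset.mem_univ _, le_of_lt hp.2.1⟩, hp.2.2⟩
  have step4 : W * k ≤ Nstrict := by
    have hcb := count_bound hq hq2 a ξ
    have hWle : (W:ℝ) ≤ ((s:ℝ) - 2)/4 := by
      rw [hW]
      calc ((((s-2)/4 : ℕ)):ℝ) ≤ ((s - 2 : ℕ) : ℝ)/4 := Nat.cast_div_le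
        _ = ((s:ℝ) - 2)/4 := by rw [Nat.cast_sub hs2]; norm_num
    have hk0 : (0:ℝ) ≤ (k:ℝ) := Nat.cast_nonneg _
    have h1 : (W:ℝ) * k ≤ (((s:ℝ) - 2)/4) * k := mul_le_mul_of_nonneg_right hWle hk0
    have h2 : (((s:ℝ) - 2)/4) * k ≤ Nstrict := by
      rw [hs, hk, hNs] at *
      linarith [hcb]
    have : ((W * k : ℕ) : ℝ) ≤ (Nstrict : ℝ) := by
      push_cast
      linarith
    exact_mod_cast this
  calc ∏ p ∈ upper n, |Real.cos (2 * Real.pi * (coef ξ a p).val / q)|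
      ≤ ρ ^ ((upper n).filter (fun p => coef ξ a p ≠ 0)).card := by rw [← step2]; exact step1
    _ ≤ ρ ^ Nstrict := pow_le_pow_of_le_one hρ0 hρ1 step3
    _ ≤ ρ ^ (W * k) := pow_le_pow_of_le_one hρ0 hρ1 step4
    _ = (ρ ^ W) ^ k := pow_mul ρ W k

lemma sum_bound [NeZero q] (hq : q.Prime) (hq2 : q ≠ 2) (a : Fin n → ZMod q)
    (hs2 : 2 ≤ (univ.filter (fun i => a i ≠ 0)).card) :
    ∑ ξ ∈ (univ : Finset (Fin n → ZMod q)).erase 0,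
        ∏ p ∈ upper n, |Real.cos (2 * Real.pi * (coef ξ a p).val / q)|
      ≤ (1 + ((q:ℝ) - 1) * Real.cos (Real.pi / q)
            ^ (((univ.filter (fun i => a i ≠ 0)).card - 2)/4)) ^ n - 1 := by
  classical
  set β := Real.cos (Real.pi / q) ^ (((univ.filter (fun i => a i ≠ 0)).card - 2)/4) with hβ
  have hβ0 : 0 ≤ β := pow_nonneg (rho_nonneg hq hq2) _
  have hβ1 : β ≤ 1 := pow_le_one₀ (rho_nonneg hq hq2) (Real.cos_le_one _)
  have hterm : ∀ ξ : Fin n → ZMod q,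
      β ^ ((univ.filter (fun i => ξ i ≠ 0)).card) = ∏ i : Fin n, (if ξ i ≠ 0 then β else 1) := by
    intro ξ
    rw [Finset.prod_ite, Finset.prod_const, Finset.prod_const, one_pow, mul_one]
  have hsumall : ∑ ξ : Fin n → ZMod q, ∏ i : Fin n, (if ξ i ≠ 0 then β else 1)
      = (1 + ((q:ℝ) - 1) * β) ^ n := by
    rw [← Fintype.piFinset_univ, ← Finset.prod_univ_sum
      (fun _ : Fin n => (univ : Finset (ZMod q)))
      (fun _ x => if x ≠ 0 then β else 1)]
    have hinner : ∑ x : ZMod q, (if x ≠ 0 then β else 1) = 1 + ((q:ℝ) - 1) * β := by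
      rw [Finset.sum_ite, Finset.sum_const, Finset.sum_const]
      have h1 : (univ : Finset (ZMod q)).filter (fun x => ¬ x ≠ 0) = {0} := by
        ext x
        simp
      have h2 : ((univ : Finset (ZMod q)).filter (fun x => x ≠ 0)).card = q - 1 := by
        rw [Finset.filter_ne', Finset.card_erase_of_mem (Finset.mem_univ _)]
        rw [Finset.card_univ, ZMod.card]
      rw [h1, h2]
      simp only [Finset.card_singleton, smul_eq_mul, one_mul, mul_one]
      have : ((q - 1 : ℕ) : ℝ) = (q:ℝ) - 1 := by
        have := hq.one_lt
        push_cast [Nat.cast_sub (by omega : 1 ≤ q)]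
        ring
      rw [nsmul_eq_mul, this]
      ring
    rw [Finset.prod_congr rfl (fun i _ => hinner), Finset.prod_const, Finset.card_univ,
      Fintype.card_fin]
  have hzero : ∏ i : Fin n, (if (0 : Fin n → ZMod q) i ≠ 0 then β else 1) = 1 := by
    simp
  have hsplit : ∑ ξ ∈ (univ : Finset (Fin n → ZMod q)).erase 0,
      ∏ i : Fin n, (if ξ i ≠ 0 then β else 1) = (1 + ((q:ℝ) - 1) * β) ^ n - 1 := by
    have key := Finset.sum_erase_add (univ : Finset (Fin n → ZMod q))
      (fun ξ => ∏ i : Fin n, (if ξ i ≠ 0 then β else 1)) (Finset.mem_univ 0)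
    rw [← hsumall, ← key]
    simp
  rw [← hsplit]
  apply Finset.sum_le_sum
  intro ξ _
  rw [← hterm ξ]
  exact prod_bound hq hq2 a ξ hs2

section charsec2
variable [NeZero q]

lemma abs_e (c : ZMod q) : ‖(ZMod.stdAddChar c : ℂ)‖ = 1 := by
  rw [ZMod.stdAddChar_apply]
  exact Circle.norm_coe _

lemma diff_bound (a v : Fin n → ZMod q) :
    |((Nat.card {σ : Fin n → Fin n → Bool //
        ((signMatrix n σ).map (Int.cast : ℤ → ZMod q)).mulVec a = v}) : ℝ) * (q:ℝ)^n
        - 2^(n*n)|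
      ≤ 2^(n*n) * ∑ ξ ∈ (univ : Finset (Fin n → ZMod q)).erase 0,
          ∏ p ∈ upper n, |Real.cos (2 * Real.pi * (coef ξ a p).val / q)| := by
  classical
  set f : (Fin n → ZMod q) → ℂ := fun ξ => (ZMod.stdAddChar (-∑ i, ξ i * v i) *
      (2^(n*n) * ∏ p ∈ upper n,
        ((ZMod.stdAddChar (coef ξ a p) + ZMod.stdAddChar (- coef ξ a p)) / 2))) with hf
  have hf0 : f 0 = 2^(n*n) := by
    rw [hf]
    have h1 : (-∑ i, (0 : Fin n → ZMod q) i * v i) = 0 := by simp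
    have h2 : ∀ p ∈ upper n, ((ZMod.stdAddChar (coef (0 : Fin n → ZMod q) a p)
        + ZMod.stdAddChar (- coef (0 : Fin n → ZMod q) a p)) / 2) = 1 := by
      intro p _
      have : coef (0 : Fin n → ZMod q) a p = 0 := by
        unfold coef
        split <;> simp
      rw [this]
      rw [AddChar.map_zero_eq_one]
      norm_num
    simp only [h1, AddChar.map_zero_eq_one, one_mul]
    rw [Finset.prod_congr rfl h2, Finset.prod_const_one, mul_one]
  have hsplit := Finset.sum_erase_add (univ : Finset (Fin n → ZMod q)) f (Finset.mem_univ 0)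
  have hiden := main_identity a v
  rw [← hf] at hiden
  have habs : ∀ ξ : Fin n → ZMod q, ‖f ξ‖
      = 2^(n*n) * ∏ p ∈ upper n, |Real.cos (2 * Real.pi * (coef ξ a p).val / q)| := by
    intro ξ
    rw [hf]
    simp only []
    rw [norm_mul, norm_mul, abs_e, one_mul, norm_pow, Complex.norm_two, norm_prod]
    congr 1
    exact Finset.prod_congr rfl fun p _ => half_abs _
  calc |((Nat.card {σ : Fin n → Fin n → Bool //
        ((signMatrix n σ).map (Int.cast : ℤ → ZMod q)).mulVec a = v}) : ℝ) * (q:ℝ)^n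
        - 2^(n*n)|
      = ‖(((Nat.card {σ : Fin n → Fin n → Bool //
          ((signMatrix n σ).map (Int.cast : ℤ → ZMod q)).mulVec a = v}) : ℂ) * (q:ℂ)^n
          - 2^(n*n))‖ := by
        rw [← Real.norm_eq_abs, ← Complex.norm_real]
        congr 1
        push_cast
        ring
    _ = ‖∑ ξ ∈ (univ : Finset (Fin n → ZMod q)).erase 0, f ξ‖ := by
        congr 1
        rw [hiden, ← hsplit, hf0]
        ring
    _ ≤ ∑ ξ ∈ (univ : Finset (Fin n → ZMod q)).erase 0, ‖f ξ‖ :=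
        norm_sum_le _ _
    _ = ∑ ξ ∈ (univ : Finset (Fin n → ZMod q)).erase 0,
          2^(n*n) * ∏ p ∈ upper n, |Real.cos (2 * Real.pi * (coef ξ a p).val / q)| :=
        Finset.sum_congr rfl fun ξ _ => habs ξ
    _ = 2^(n*n) * ∑ ξ ∈ (univ : Finset (Fin n → ZMod q)).erase 0,
          ∏ p ∈ upper n, |Real.cos (2 * Real.pi * (coef ξ a p).val / q)| :=
        (Finset.mul_sum _ _ _).symm
end charsec2

end CJMS

open Finset CJMS in
set_option maxHeartbeats 1000000 in
theorem key_lemma :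
    ∃ C > (0 : ℝ), ∀ ε > (0 : ℝ), ∃ N : ℕ, ∀ n : ℕ, N ≤ n → ∀ q : ℕ,
      q.Prime → q ≠ 2 → (q : ℝ) ≤ Real.sqrt n / (Real.log n) ^ C →
      ∀ a : Fin n → ZMod q, ¬ inL n q a → ∀ v : Fin n → ZMod q,
        |probSym n (fun M => (M.map (Int.cast : ℤ → ZMod q)).mulVec a = v)
            - (q : ℝ) ^ (-(n : ℤ))|
          ≤ ε * (q : ℝ) ^ (-(n : ℤ)) := by
  refine ⟨2, by norm_num, ?_⟩
  intro ε hε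
  set L := Real.log (1 + ε) with hLdef
  have hL : 0 < L := Real.log_pos (by linarith)
  set c₀ : ℝ := 4 * (2 + max 0 (1 - Real.log L)) with hc₀
  -- eventual conditions
  have hev : ∀ᶠ x : ℝ in Filter.atTop,
      (c₀ ≤ Real.log x ∧ (5/2) * (Real.log x)^4 / x ≤ 1
        ∧ (Real.log x)^2 / x ≤ 1/7 ∧ 1 ≤ Real.log x) := by
    have h1 := Real.tendsto_log_atTop.eventually_ge_atTop c₀
    have h1' := Real.tendsto_log_atTop.eventually_ge_atTop (1:ℝ)
    have h2 := (Real.tendsto_pow_log_div_mul_add_atTop 1 0 4 one_ne_zero).eventually_le_const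
      (by norm_num : (0:ℝ) < 2/5)
    have h3 := (Real.tendsto_pow_log_div_mul_add_atTop 1 0 2 one_ne_zero).eventually_le_const
      (by norm_num : (0:ℝ) < 1/7)
    filter_upwards [h1, h1', h2, h3] with x hx1 hx1' hx2 hx3
    refine ⟨hx1, ?_, ?_, hx1'⟩
    · have h' : Real.log x ^ 4 / (1 * x + 0) ≤ 2/5 := hx2
      rw [one_mul, add_zero] at h'
      calc (5/2) * Real.log x ^ 4 / x = (5/2) * (Real.log x ^ 4 / x) := by ring
        _ ≤ (5/2) * (2/5) := by
            apply mul_le_mul_of_nonneg_left h' (by norm_num)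
        _ = 1 := by norm_num
    · have : Real.log x ^ 2 / (1 * x + 0) ≤ 1/7 := hx3
      rwa [one_mul, add_zero] at this
  have hevN : ∀ᶠ m : ℕ in Filter.atTop,
      (c₀ ≤ Real.log m ∧ (5/2) * (Real.log m)^4 / m ≤ 1
        ∧ (Real.log m)^2 / m ≤ 1/7 ∧ 1 ≤ Real.log m) :=
    tendsto_natCast_atTop_atTop.eventually hev
  obtain ⟨N, hN⟩ := Filter.eventually_atTop.mp hevN
  refine ⟨N, ?_⟩
  intro n hn q hqp hq2 hqle a ha v
  haveI : NeZero q := ⟨hqp.ne_zero⟩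
  obtain ⟨hcond1, hcond2, hcond3, hlog1⟩ := hN n hn
  have hlogpos : 0 < Real.log n := by linarith
  have hn1 : 1 ≤ n := by
    by_contra h
    push_neg at h
    interval_cases n
    simp [Real.log_zero] at hlog1
    linarith
  have hn0R : (0:ℝ) < n := by exact_mod_cast hn1
  have hn1R : (1:ℝ) ≤ n := by exact_mod_cast hn1
  have hq3 : 3 ≤ q := qge3 hqp hq2
  have hq3R : (3:ℝ) ≤ q := by exact_mod_cast hq3
  have hq0R : (0:ℝ) < q := by linarith
  -- rewrite the rpow
  have hqle' : (q:ℝ) ≤ Real.sqrt n / (Real.log n)^2 := by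
    rwa [show ((2:ℝ)) = ((2:ℕ):ℝ) by norm_num, Real.rpow_natCast] at hqle
  have hlogsq : (0:ℝ) < (Real.log n)^2 := by positivity
  have hsqrt_nonneg : (0:ℝ) ≤ Real.sqrt n := Real.sqrt_nonneg _
  have hq_le_sqrt : (q:ℝ) ≤ Real.sqrt n := by
    calc (q:ℝ) ≤ Real.sqrt n / (Real.log n)^2 := hqle'
      _ ≤ Real.sqrt n / 1 := by
          apply div_le_div_of_nonneg_left hsqrt_nonneg one_pos
          nlinarith
      _ = Real.sqrt n := by ring
  have hq_le_n : (q:ℝ) ≤ n := by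
    calc (q:ℝ) ≤ Real.sqrt n := hq_le_sqrt
      _ ≤ n := by
          have h := Real.sqrt_le_sqrt (show (n:ℝ) ≤ (n:ℝ)^2 by nlinarith [hn1R, hn0R])
          rwa [Real.sqrt_sq hn0R.le] at h
  have hq2n : (q:ℝ)^2 ≤ (n:ℝ)/(Real.log n)^4 := by
    have h1 : (q:ℝ)^2 ≤ (Real.sqrt n / (Real.log n)^2)^2 := by
      apply pow_le_pow_left₀ hq0R.le hqle'
    calc (q:ℝ)^2 ≤ (Real.sqrt n / (Real.log n)^2)^2 := h1
      _ = (n:ℝ)/(Real.log n)^4 := by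
          rw [div_pow, Real.sq_sqrt (by positivity : (0:ℝ) ≤ (n:ℝ))]
          congr 1
          ring
  -- the support size
  set S := (univ.filter (fun i => a i ≠ 0)) with hSdef
  have hm7 : (7:ℝ) ≤ (n:ℝ)/(Real.log n)^2 := by
    rw [le_div_iff₀ hlogsq]
    rw [div_le_div_iff₀ hn0R (by norm_num : (0:ℝ) < 7)] at hcond3
    linarith
  have hsL : (n:ℝ)/(Real.log n)^2 < S.card := by
    rw [inL] at ha
    push_neg at ha
    have ha0 := ha 0
    have hsplit : (univ.filter (fun i => a i = 0)).card + S.card = n := by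
      rw [hSdef]
      have := Finset.card_filter_add_card_filter_not
        (s := (univ : Finset (Fin n))) (p := fun i => a i = 0)
      simpa using this
    have h1 : ((univ.filter (fun i => a i = 0)).card : ℝ) < (n:ℝ) - n/(Real.log n)^2 := ha0
    have h2 : ((univ.filter (fun i => a i = 0)).card : ℝ) + S.card = n := by
      exact_mod_cast hsplit
    linarith
  have hs8 : 8 ≤ S.card := by
    have : (7:ℝ) < S.card := lt_of_le_of_lt hm7 hsL
    exact_mod_cast (by exact_mod_cast this : 7 < S.card)
  have hs2 : 2 ≤ S.card := by omega
  -- W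
  set W := (S.card - 2)/4 with hWdef
  have hW4 : S.card - 5 ≤ 4 * W := by
    omega
  have hWlbR : ((n:ℝ)/(Real.log n)^2 - 5)/4 ≤ (W:ℝ) := by
    have h1 : ((S.card:ℝ) - 5) ≤ 4 * W := by
      have := hW4
      have h2 : ((S.card - 5 : ℕ):ℝ) ≤ ((4 * W : ℕ):ℝ) := by exact_mod_cast this
      rw [Nat.cast_sub (by omega)] at h2
      push_cast at h2
      linarith
    linarith [hsL]
  have hW0 : (0:ℝ) ≤ (W:ℝ) := Nat.cast_nonneg _
  -- ρ and β
  set ρ := Real.cos (Real.pi / q) with hρdef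
  set β := ρ ^ W with hβdef
  have hρ0 : 0 ≤ ρ := rho_nonneg hqp hq2
  have hβ0 : 0 ≤ β := pow_nonneg hρ0 _
  have hq2R : (0:ℝ) < (q:ℝ)^2 := by positivity
  have hβexp : β ≤ Real.exp (-(2 * (W:ℝ) / (q:ℝ)^2)) := by
    have h1 : ρ ≤ Real.exp (-(2/(q:ℝ)^2)) := by
      calc ρ ≤ 1 - 2/(q:ℝ)^2 := cos_pi_div_le hq3
        _ ≤ Real.exp (-(2/(q:ℝ)^2)) := by
            have := Real.add_one_le_exp (-(2/(q:ℝ)^2))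
            linarith
    calc β ≤ (Real.exp (-(2/(q:ℝ)^2)))^W := pow_le_pow_left₀ hρ0 h1 W
      _ = Real.exp (-(2 * (W:ℝ) / (q:ℝ)^2)) := by
          rw [← Real.exp_nat_mul]
          congr 1
          ring
  -- exponent bound
  have hEbig : (Real.log n)^2/2 - 1 ≤ 2 * (W:ℝ) / (q:ℝ)^2 := by
    have hinv : (Real.log n)^4/(n:ℝ) ≤ 1/(q:ℝ)^2 := by
      rw [div_le_div_iff₀ hn0R hq2R]
      calc (Real.log n)^4 * (q:ℝ)^2 ≤ (Real.log n)^4 * ((n:ℝ)/(Real.log n)^4) := by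
            apply mul_le_mul_of_nonneg_left hq2n (by positivity)
        _ = (n:ℝ) := by
            field_simp
        _ = 1 * (n:ℝ) := by ring
    have h1 : 2 * (W:ℝ) / (q:ℝ)^2 = 2 * (W:ℝ) * (1/(q:ℝ)^2) := by ring
    have h2 : 2 * (W:ℝ) * ((Real.log n)^4/(n:ℝ)) ≤ 2 * (W:ℝ) * (1/(q:ℝ)^2) := by
      apply mul_le_mul_of_nonneg_left hinv (by positivity)
    have h3 : 2 * (((n:ℝ)/(Real.log n)^2 - 5)/4) * ((Real.log n)^4/(n:ℝ))
        ≤ 2 * (W:ℝ) * ((Real.log n)^4/(n:ℝ)) := by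
      apply mul_le_mul_of_nonneg_right ?_ (by positivity)
      linarith
    have h4 : 2 * (((n:ℝ)/(Real.log n)^2 - 5)/4) * ((Real.log n)^4/(n:ℝ))
        = (Real.log n)^2/2 - (5/2) * (Real.log n)^4/n := by
      field_simp
      ring
    rw [h1]
    rw [h4] at h3
    linarith
  -- main numeric inequality: n (q-1) β ≤ L
  have hnq : (n:ℝ) * ((q:ℝ) - 1) ≤ Real.exp (2 * Real.log n) := by
    have h1 : (n:ℝ) * ((q:ℝ) - 1) ≤ (n:ℝ) * (n:ℝ) := by nlinarith [hq_le_n, hn0R]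
    have h2 : Real.exp (2 * Real.log n) = (n:ℝ) * (n:ℝ) := by
      rw [two_mul, Real.exp_add, Real.exp_log hn0R]
    linarith
  have hmain : (n:ℝ) * ((q:ℝ) - 1) * β ≤ L := by
    have h0 : 0 ≤ (n:ℝ) * ((q:ℝ) - 1) := by nlinarith [hq3R, hn0R]
    have h1 : (n:ℝ) * ((q:ℝ) - 1) * β
        ≤ Real.exp (2*Real.log n) * Real.exp (-(2*(W:ℝ)/(q:ℝ)^2)) :=
      mul_le_mul hnq hβexp hβ0 (Real.exp_nonneg _)
    have h2 : Real.exp (2*Real.log n) * Real.exp (-(2*(W:ℝ)/(q:ℝ)^2))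
        = Real.exp (2*Real.log n - 2*(W:ℝ)/(q:ℝ)^2) := by
      rw [← Real.exp_add, ← sub_eq_add_neg]
    have hquad : 2*Real.log n + 1 - Real.log L ≤ (Real.log n)^2/4 := by
      have hc : 2 + max 0 (1 - Real.log L) ≤ Real.log n / 4 := by
        rw [le_div_iff₀ (by norm_num : (0:ℝ) < 4)]
        linarith [hcond1]
      have hmax : 1 - Real.log L ≤ max 0 (1 - Real.log L) * Real.log n := by
        calc 1 - Real.log L ≤ max 0 (1 - Real.log L) := le_max_right _ _
          _ = max 0 (1 - Real.log L) * 1 := by ring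
          _ ≤ max 0 (1 - Real.log L) * Real.log n :=
              mul_le_mul_of_nonneg_left hlog1 (le_max_left _ _)
      calc 2*Real.log n + 1 - Real.log L
          ≤ 2*Real.log n + max 0 (1 - Real.log L) * Real.log n := by linarith
        _ = (2 + max 0 (1 - Real.log L)) * Real.log n := by ring
        _ ≤ (Real.log n / 4) * Real.log n := mul_le_mul_of_nonneg_right hc hlogpos.le
        _ = (Real.log n)^2/4 := by ring
    have h3 : 2*Real.log n - 2*(W:ℝ)/(q:ℝ)^2 ≤ Real.log L := by
      linarith [hEbig, hquad, sq_nonneg (Real.log n)]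
    calc (n:ℝ)*((q:ℝ)-1)*β ≤ Real.exp (2*Real.log n - 2*(W:ℝ)/(q:ℝ)^2) := by
          rw [← h2]
          exact h1
      _ ≤ Real.exp (Real.log L) := Real.exp_le_exp.mpr h3
      _ = L := Real.exp_log hL
  -- the sum over nonzero frequencies
  set Esum := ∑ ξ ∈ (univ : Finset (Fin n → ZMod q)).erase 0,
      ∏ p ∈ upper n, |Real.cos (2 * Real.pi * (coef ξ a p).val / q)| with hEsum
  have hE0 : 0 ≤ Esum := Finset.sum_nonneg fun ξ _ => Finset.prod_nonneg fun p _ => abs_nonneg _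
  have hEε : Esum ≤ ε := by
    have h1 := sum_bound hqp hq2 a hs2
    have h1' : Esum ≤ (1 + ((q:ℝ)-1) * β)^n - 1 := h1
    have h2 : (1 + ((q:ℝ)-1)*β)^n ≤ Real.exp ((n:ℝ)*(((q:ℝ)-1)*β)) := by
      calc (1 + ((q:ℝ)-1)*β)^n ≤ (Real.exp (((q:ℝ)-1)*β))^n := by
            apply pow_le_pow_left₀
              (by linarith [mul_nonneg (show (0:ℝ) ≤ (q:ℝ)-1 by linarith) hβ0]) ?_ n
            linarith [Real.add_one_le_exp (((q:ℝ)-1)*β)]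
        _ = Real.exp ((n:ℝ)*(((q:ℝ)-1)*β)) := by rw [← Real.exp_nat_mul]
    have h3 : Real.exp ((n:ℝ)*(((q:ℝ)-1)*β)) ≤ 1 + ε := by
      calc Real.exp ((n:ℝ)*(((q:ℝ)-1)*β)) ≤ Real.exp L := by
            apply Real.exp_le_exp.mpr
            rw [← mul_assoc]
            exact hmain
        _ = 1 + ε := Real.exp_log (by linarith)
    linarith
  -- probability algebra
  have hdb := diff_bound (n := n) (q := q) a v
  rw [← hEsum] at hdb
  have hcardfun : ((Fintype.card (Fin n → Fin n → Bool) : ℕ) : ℝ) = 2^(n*n) := by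
    have h : Fintype.card (Fin n → Fin n → Bool) = 2^(n*n) := by
      rw [pow_mul]
      simp
    rw [h]
    push_cast
    ring
  set cnt := ((Nat.card {σ : Fin n → Fin n → Bool //
        ((signMatrix n σ).map (Int.cast : ℤ → ZMod q)).mulVec a = v}) : ℝ) with hcnt
  have hps : probSym n (fun M => (M.map (Int.cast : ℤ → ZMod q)).mulVec a = v)
      = cnt / 2^(n*n) := by
    rw [probSym, hcnt, hcardfun]
  have hq_npos : (0:ℝ) < (q:ℝ)^n := by positivity
  have h2pos : (0:ℝ) < (2:ℝ)^(n*n) := by positivity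
  have hzp : (q:ℝ)^(-(n:ℤ)) = ((q:ℝ)^n)⁻¹ := by
    rw [zpow_neg, zpow_natCast]
  rw [hps, hzp]
  have hrw : cnt/2^(n*n) - ((q:ℝ)^n)⁻¹ = (cnt * (q:ℝ)^n - 2^(n*n))/(2^(n*n) * (q:ℝ)^n) := by
    field_simp
  rw [hrw, abs_div, abs_of_pos (by positivity : (0:ℝ) < 2^(n*n) * (q:ℝ)^n),
    div_le_iff₀ (by positivity : (0:ℝ) < 2^(n*n) * (q:ℝ)^n)]
  calc |cnt * (q:ℝ)^n - 2^(n*n)| ≤ 2^(n*n) * Esum := hdb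
    _ ≤ 2^(n*n) * ε := mul_le_mul_of_nonneg_left hEε h2pos.le
    _ = ε * ((q:ℝ)^n)⁻¹ * (2^(n*n) * (q:ℝ)^n) := by
        field_simp
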